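/- Let n ≥ 2, k ≥ 1, R ∈ (-1,1), and let ψ be a solution on (-1,r₀) of ψ'(r) = -(1/(k(1-r²)))(ψ(r)²+1)(√(1-r²)ψ(r)² - (n-1)(r-R)ψ(r) + √(1-r²)) with r₀ ∈ (-1,a) and η₁(r₀) < ψ(r₀) < η₂(r₀), where a is the smaller root of B(r) = ((n-1)²+4)r² - 2(n-1)²Rr + (n-1)²R² - 4. Then ψ(r) → -∞ as r ↓ -1. -/

import Mathlib

lemma hasDerivAt_sqrt_one_sub_sq {r : ℝ} (h : 0 < 1 - r^2) :
    HasDerivAt (fun x : ℝ => Real.sqrt (1 - x^2)) (-r / Real.sqrt (1 - r^2)) r := by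
  have h1 : HasDerivAt (fun x : ℝ => 1 - x^2) (-(2*r)) r := by
    simpa using ((hasDerivAt_pow 2 r).const_sub 1)
  have h2 := (Real.hasDerivAt_sqrt (ne_of_gt h)).comp r h1
  have hs : Real.sqrt (1 - r^2) ≠ 0 := ne_of_gt (Real.sqrt_pos.mpr h)
  refine h2.congr_deriv ?_
  field_simp

lemma hasDerivAt_log_one_add {x : ℝ} (h : 0 < 1 + x) :
    HasDerivAt (fun y : ℝ => Real.log (1 + y)) ((1+x)⁻¹) x := by
  have h1 : HasDerivAt (fun y : ℝ => 1 + y) 1 x := (hasDerivAt_id x).const_add 1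
  have h2 := (Real.hasDerivAt_log (ne_of_gt h)).comp x h1
  exact h2.congr_deriv (by simp)

noncomputable def Bq (n : ℕ) (R r : ℝ) : ℝ :=
  (((n : ℝ) - 1) ^ 2 + 4) * r ^ 2 - 2 * ((n : ℝ) - 1) ^ 2 * R * r + ((n : ℝ) - 1) ^ 2 * R ^ 2 - 4

noncomputable def rootA (n : ℕ) (R : ℝ) : ℝ :=
  (((n : ℝ) - 1) ^ 2 * R - 2 * Real.sqrt (((n : ℝ) - 1) ^ 2 * (1 - R ^ 2) + 4)) / (((n : ℝ) - 1) ^ 2 + 4)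

noncomputable def rootB (n : ℕ) (R : ℝ) : ℝ :=
  (((n : ℝ) - 1) ^ 2 * R + 2 * Real.sqrt (((n : ℝ) - 1) ^ 2 * (1 - R ^ 2) + 4)) / (((n : ℝ) - 1) ^ 2 + 4)

noncomputable def Aq (n : ℕ) (R x r : ℝ) : ℝ :=
  Real.sqrt (1 - r ^ 2) * x ^ 2 - ((n : ℝ) - 1) * (r - R) * x + Real.sqrt (1 - r ^ 2)

noncomputable def eta1 (n : ℕ) (R r : ℝ) : ℝ :=
  (((n : ℝ) - 1) * (r - R) - Real.sqrt (Bq n R r)) / (2 * Real.sqrt (1 - r ^ 2))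

noncomputable def eta2 (n : ℕ) (R r : ℝ) : ℝ :=
  (((n : ℝ) - 1) * (r - R) + Real.sqrt (Bq n R r)) / (2 * Real.sqrt (1 - r ^ 2))

noncomputable def Phi (n k : ℕ) (R r p : ℝ) : ℝ :=
  -(1 / ((k : ℝ) * (1 - r ^ 2))) * (p ^ 2 + 1) *
    (Real.sqrt (1 - r ^ 2) * p ^ 2 - ((n : ℝ) - 1) * (r - R) * p + Real.sqrt (1 - r ^ 2))

open Set Filter in
set_option maxHeartbeats 2000000 in
theorem stmt_9 (n k : ℕ) (hn : 2 ≤ n) (hk : 1 ≤ k) (R : ℝ) (hR1 : -1 < R) (hR2 : R < 1)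
    (r₀ : ℝ) (hr₀ : r₀ ∈ Set.Ioo (-1 : ℝ) (rootA n R)) (ψ : ℝ → ℝ)
    (hode : ∀ r ∈ Set.Ioc (-1 : ℝ) r₀, HasDerivAt ψ (Phi n k R r (ψ r)) r)
    (h1 : eta1 n R r₀ < ψ r₀) (h2 : ψ r₀ < eta2 n R r₀) :
    Filter.Tendsto ψ (nhdsWithin (-1) (Set.Ioi (-1))) Filter.atBot := by
  obtain ⟨hr₀1, hr₀A⟩ := hr₀
  obtain ⟨ν, hνdef⟩ : ∃ d : ℝ, d = (n:ℝ) - 1 := ⟨_, rfl⟩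
  have hν1 : (1:ℝ) ≤ ν := by
    have : (2:ℝ) ≤ (n:ℝ) := by exact_mod_cast hn
    rw [hνdef]; linarith
  have hν0 : (0:ℝ) < ν := lt_of_lt_of_le one_pos hν1
  have hk0 : (0:ℝ) < (k:ℝ) := by exact_mod_cast hk
  have hR2' : (0:ℝ) < 1 - R^2 := by nlinarith
  have hE : (0:ℝ) < ν^2*(1-R^2)+4 := by nlinarith [sq_nonneg ν]
  obtain ⟨s, hsdef⟩ : ∃ d : ℝ, d = Real.sqrt (ν^2*(1-R^2)+4) := ⟨_, rfl⟩
  have hs2 : s^2 = ν^2*(1-R^2)+4 := by rw [hsdef]; exact Real.sq_sqrt hE.le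
  have hsge2 : (2:ℝ) ≤ s := by
    have h4 : (4:ℝ) ≤ ν^2*(1-R^2)+4 := by nlinarith [sq_nonneg ν]
    calc (2:ℝ) = Real.sqrt 4 := by
          rw [show (4:ℝ) = 2^2 by norm_num, Real.sqrt_sq (by norm_num : (0:ℝ) ≤ 2)]
      _ ≤ s := by rw [hsdef]; exact Real.sqrt_le_sqrt h4
  have hc4 : (0:ℝ) < ν^2+4 := by positivity
  have hrootA : rootA n R = (ν^2*R - 2*s)/(ν^2+4) := by
    rw [rootA, hsdef, hνdef]
  have hAltR : rootA n R < R := by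
    rw [hrootA, div_lt_iff₀ hc4]; nlinarith
  have hr₀R : r₀ < R := hr₀A.trans hAltR
  have hr₀lt1 : r₀ < 1 := hr₀R.trans hR2
  -- B is positive on (-∞, rootA)
  have hBpos : ∀ r : ℝ, r ≤ r₀ → 0 < Bq n R r := by
    intro r hr
    have hrA : r < rootA n R := lt_of_le_of_lt hr hr₀A
    rw [hrootA, lt_div_iff₀ hc4] at hrA
    have hBq : Bq n R r = (ν^2+4)*r^2 - 2*ν^2*R*r + ν^2*R^2 - 4 := by
      rw [Bq, hνdef]
    rw [hBq]
    have hx1 : (ν^2+4)*r - ν^2*R + 2*s < 0 := by nlinarith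
    have hx2 : (ν^2+4)*r - ν^2*R - 2*s < 0 := by nlinarith
    have hprod := mul_pos_of_neg_of_neg hx1 hx2
    have key : (ν^2+4) * ((ν^2+4)*r^2 - 2*ν^2*R*r + ν^2*R^2 - 4)
        = ((ν^2+4)*r - ν^2*R + 2*s)*((ν^2+4)*r - ν^2*R - 2*s) := by
      linear_combination 4*hs2
    by_contra hB
    push_neg at hB
    have : (ν^2+4) * ((ν^2+4)*r^2 - 2*ν^2*R*r + ν^2*R^2 - 4) ≤ 0 :=
      mul_nonpos_of_nonneg_of_nonpos hc4.le hB
    rw [key] at this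
    linarith
  -- the quadratic along the solution
  obtain ⟨g, hgdef⟩ : ∃ g : ℝ → ℝ,
      g = fun x => Real.sqrt (1-x^2)*(ψ x)^2 - ν*(x-R)*(ψ x) + Real.sqrt (1-x^2) := ⟨_, rfl⟩
  have hPhig : ∀ r : ℝ, Phi n k R r (ψ r) = -(1/((k:ℝ)*(1-r^2))) * ((ψ r)^2+1) * g r := by
    intro r
    rw [Phi, hgdef, hνdef]
  -- initial condition : g r₀ < 0
  have hfr₀ : (0:ℝ) < 1 - r₀^2 := by nlinarith
  have hs₀ : 0 < Real.sqrt (1 - r₀^2) := Real.sqrt_pos.mpr hfr₀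
  have hs₀2 : (Real.sqrt (1-r₀^2))^2 = 1 - r₀^2 := Real.sq_sqrt hfr₀.le
  have hB₀ : 0 < Bq n R r₀ := hBpos r₀ le_rfl
  have hrtB : (Real.sqrt (Bq n R r₀))^2 = Bq n R r₀ := Real.sq_sqrt hB₀.le
  have hBval : Bq n R r₀ = ν^2*(r₀-R)^2 - 4*(1-r₀^2) := by
    rw [Bq, hνdef]; ring
  have hg0 : g r₀ < 0 := by
    rw [eta1] at h1
    rw [eta2] at h2
    rw [div_lt_iff₀ (by positivity)] at h1
    rw [lt_div_iff₀ (by positivity)] at h2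
    rw [← hνdef] at h1 h2
    have key1 : 0 < Real.sqrt (Bq n R r₀) - (ψ r₀*(2*Real.sqrt (1-r₀^2)) - ν*(r₀-R)) := by
      linarith
    have key2 : 0 < Real.sqrt (Bq n R r₀) + (ψ r₀*(2*Real.sqrt (1-r₀^2)) - ν*(r₀-R)) := by
      linarith
    have key := mul_pos key1 key2
    by_contra hcon
    push_neg at hcon
    have hcon' : 0 ≤ Real.sqrt (1-r₀^2)*(ψ r₀)^2 - ν*(r₀-R)*(ψ r₀) + Real.sqrt (1-r₀^2) := by
      simp only [hgdef] at hcon; exact hcon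
    have h4 := mul_nonneg hs₀.le hcon'
    have e5 : (0:ℝ) < (Real.sqrt (Bq n R r₀))^2 + 4*(Real.sqrt (1-r₀^2))^2 - ν^2*(r₀-R)^2 := by
      linarith [key, h4]
    rw [hrtB, hs₀2, hBval] at e5
    linarith [e5]
  -- derivative of g along the solution
  have hgderiv : ∀ r ∈ Set.Ioc (-1:ℝ) r₀, (0:ℝ) < 1 - r^2 ∧ HasDerivAt g
      ((-r/Real.sqrt (1-r^2)) * ((ψ r)^2+1) - ν*(ψ r)
        + (Real.sqrt (1-r^2)*(2*ψ r) - ν*(r-R)) * Phi n k R r (ψ r)) r := by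
    intro r hr
    have hrlt1 : r < 1 := lt_of_le_of_lt hr.2 hr₀lt1
    have hfpos : (0:ℝ) < 1 - r^2 := by
      have := mul_pos (show (0:ℝ) < 1 - r by linarith)
        (show (0:ℝ) < 1 + r from by linarith [hr.1])
      linarith [this]
    refine ⟨hfpos, ?_⟩
    have hψ := hode r hr
    have hf := hasDerivAt_sqrt_one_sub_sq hfpos
    have hsq : HasDerivAt (fun x => (ψ x)^2) (2 * ψ r * Phi n k R r (ψ r)) r := by
      have := hψ.pow 2; simp at this; exact this
    have hmul1 := hf.mul hsq
    have hmul2 : HasDerivAt (fun x => ν*(x-R)*(ψ x)) (ν*(ψ r) + ν*(r-R)*Phi n k R r (ψ r)) r := by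
      have := (((hasDerivAt_id r).sub_const R).const_mul ν).mul hψ
      simp at this; exact this
    have h3 := (hmul1.sub hmul2).add hf
    rw [hgdef]
    exact h3.congr_deriv (by ring)
  -- Step 1: g stays negative on all of Ioc (-1) r₀
  have hgneg : ∀ r ∈ Set.Ioc (-1:ℝ) r₀, g r < 0 := by
    by_contra hcon
    push_neg at hcon
    obtain ⟨r', hr'mem, hge⟩ := hcon
    set T : Set ℝ := {x | x ∈ Set.Ioc (-1:ℝ) r₀ ∧ 0 ≤ g x} with hTdef
    have hTne : T.Nonempty := ⟨r', hr'mem, hge⟩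
    have hTbdd : BddAbove T := ⟨r₀, fun x hx => hx.1.2⟩
    set r₁ := sSup T with hr₁def
    have hlub : IsLUB T r₁ := isLUB_csSup hTne hTbdd
    have hr₁mem : r₁ ∈ Set.Ioc (-1:ℝ) r₀ :=
      ⟨lt_of_lt_of_le hr'mem.1 (hlub.1 ⟨hr'mem, hge⟩), hlub.2 fun x hx => hx.1.2⟩
    obtain ⟨hfpos₁, hD₁⟩ := hgderiv r₁ hr₁mem
    have hg_cont : ContinuousAt g r₁ := hD₁.continuousAt
    have hg₁_nonneg : 0 ≤ g r₁ := by
      have hcl : r₁ ∈ closure T := hlub.mem_closure hTne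
      have hnb : (nhdsWithin r₁ T).NeBot := mem_closure_iff_nhdsWithin_neBot.mp hcl
      have ht0 : Filter.Tendsto g (nhdsWithin r₁ T) (nhds (g r₁)) :=
        (hg_cont.continuousWithinAt : ContinuousWithinAt g T r₁).tendsto
      refine ge_of_tendsto ht0 ?_
      filter_upwards [self_mem_nhdsWithin] with x hx using hx.2
    have hr₁lt : r₁ < r₀ :=
      lt_of_le_of_ne hr₁mem.2 (fun h => absurd hg0 (not_lt.mpr (h ▸ hg₁_nonneg)))
    have habove : ∀ x ∈ Set.Ioc r₁ r₀, g x < 0 := by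
      intro x hx
      by_contra hge2
      push_neg at hge2
      have hxT : x ∈ T := ⟨⟨lt_trans hr₁mem.1 hx.1, hx.2⟩, hge2⟩
      exact absurd (hlub.1 hxT) (not_le.mpr hx.1)
    have hg₁_nonpos : g r₁ ≤ 0 := by
      have ht : Filter.Tendsto g (nhdsWithin r₁ (Set.Ioi r₁)) (nhds (g r₁)) :=
        hg_cont.continuousWithinAt.tendsto
      refine le_of_tendsto ht ?_
      filter_upwards [Ioc_mem_nhdsGT_of_mem ⟨le_rfl, hr₁lt⟩] with x hx
      exact (habove x hx).le
    have hg₁0 : g r₁ = 0 := le_antisymm hg₁_nonpos hg₁_nonneg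
    have hψ'0 : Phi n k R r₁ (ψ r₁) = 0 := by rw [hPhig r₁, hg₁0, mul_zero]
    rw [hψ'0, mul_zero, add_zero] at hD₁
    -- facts at r₁
    have hsf₁ : 0 < Real.sqrt (1-r₁^2) := Real.sqrt_pos.mpr hfpos₁
    have hsf₁2 : Real.sqrt (1-r₁^2) * Real.sqrt (1-r₁^2) = 1-r₁^2 :=
      Real.mul_self_sqrt hfpos₁.le
    have hr₁R : r₁ < R := lt_of_le_of_lt hr₁mem.2 hr₀R
    have heq : Real.sqrt (1-r₁^2)*((ψ r₁)^2+1) = ν*(r₁-R)*(ψ r₁) := by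
      have := hg₁0
      simp only [hgdef] at this
      linarith [this]
    have hψ₁neg : ψ r₁ < 0 := by
      by_contra hpos
      push_neg at hpos
      have hle : ν*(r₁-R)*(ψ r₁) ≤ 0 :=
        mul_nonpos_of_nonpos_of_nonneg
          (mul_nonpos_of_nonneg_of_nonpos hν0.le (by linarith)) hpos
      have hgt : 0 < Real.sqrt (1-r₁^2) * ((ψ r₁)^2+1) :=
        mul_pos hsf₁ (by positivity)
      rw [heq] at hgt
      linarith
    have hr₁lt1 : r₁ < 1 := lt_of_le_of_lt hr₁mem.2 hr₀lt1
    have h1R : 0 < 1 - r₁*R := by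
      have e1 : 0 < (1+r₁)*(1-R) :=
        mul_pos (by linarith [hr₁mem.1]) (by linarith)
      have e2 : 0 < (1-r₁)*(1+R) := mul_pos (by linarith) (by linarith)
      linarith [e1, e2]
    -- positivity of the derivative of g at r₁
    obtain ⟨D, hDdef⟩ : ∃ d : ℝ,
      d = (-r₁/Real.sqrt (1-r₁^2)) * ((ψ r₁)^2+1) - ν*(ψ r₁) := ⟨_, rfl⟩
    rw [← hDdef] at hD₁
    have hdiv : (1-r₁^2) * (-r₁/Real.sqrt (1-r₁^2)) = -r₁ * Real.sqrt (1-r₁^2) := by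
      rw [← hsf₁2]
      field_simp
      rw [Real.sqrt_sq hsf₁.le]
    have hkey : (1-r₁^2) * D = -(ν*(ψ r₁)*(1-r₁*R)) := by
      rw [hDdef, mul_sub, ← mul_assoc, hdiv]
      linear_combination (-r₁) * heq
    have hDpos : 0 < D := by
      have hpos : 0 < (1-r₁^2) * D := by
        rw [hkey]
        have := mul_pos (mul_pos hν0 (neg_pos.mpr hψ₁neg)) h1R
        linarith [this]
      by_contra hDle
      push_neg at hDle
      have := mul_nonpos_of_nonneg_of_nonpos hfpos₁.le hDle
      linarith [this, hpos]
    -- but the slope from the right is nonpositive : contradiction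
    have hslope : Filter.Tendsto (slope g r₁) (nhdsWithin r₁ (Set.Ioi r₁)) (nhds D) :=
      (hasDerivAt_iff_tendsto_slope.mp hD₁).mono_left
        (nhdsWithin_mono _ fun x hx => ne_of_gt hx)
    have hDle : D ≤ 0 := by
      refine le_of_tendsto hslope ?_
      filter_upwards [Ioc_mem_nhdsGT_of_mem ⟨le_rfl, hr₁lt⟩] with x hx
      rw [slope_def_field, hg₁0, sub_zero]
      exact div_nonpos_of_nonpos_of_nonneg (habove x hx).le (by linarith [hx.1])
    linarith
  -- solutions are negative
  have hψneg : ∀ r ∈ Set.Ioc (-1:ℝ) r₀, ψ r < 0 := by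
    intro r hr
    have hg := hgneg r hr
    simp only [hgdef] at hg
    have hfpos : (0:ℝ) < 1 - r^2 := (hgderiv r hr).1
    have hsf : 0 < Real.sqrt (1-r^2) := Real.sqrt_pos.mpr hfpos
    by_contra hpos
    push_neg at hpos
    have hrR : r < R := lt_of_le_of_lt hr.2 hr₀R
    have hle : ν*(r-R)*(ψ r) ≤ 0 :=
      mul_nonpos_of_nonpos_of_nonneg
        (mul_nonpos_of_nonneg_of_nonpos hν0.le (by linarith)) hpos
    linarith [mul_nonneg hsf.le (sq_nonneg (ψ r))]
  -- positivity of Phi, hence strict monotonicity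
  have hPhipos : ∀ r ∈ Set.Ioc (-1:ℝ) r₀, 0 < Phi n k R r (ψ r) := by
    intro r hr
    have hfpos : (0:ℝ) < 1 - r^2 := (hgderiv r hr).1
    rw [hPhig r]
    have hu : 0 < 1/((k:ℝ)*(1-r^2)) := by positivity
    have := mul_pos (mul_pos hu (show (0:ℝ) < (ψ r)^2+1 by positivity))
      (neg_pos.mpr (hgneg r hr))
    linarith [this]
  have hmonoψ : StrictMonoOn ψ (Set.Ioc (-1:ℝ) r₀) := by
    apply strictMonoOn_of_deriv_pos (convex_Ioc _ _)
    · intro x hx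
      exact (hode x hx).continuousAt.continuousWithinAt
    · intro x hx
      rw [interior_Ioc] at hx
      rw [(hode x ⟨hx.1, hx.2.le⟩).deriv]
      exact hPhipos x ⟨hx.1, hx.2.le⟩
  -- main claim : ψ takes arbitrarily small values
  have hclaim : ∀ M : ℝ, ∃ r ∈ Set.Ioc (-1:ℝ) r₀, ψ r < M := by
    intro M
    by_contra hcon
    push_neg at hcon
    have hMr₀ : M ≤ ψ r₀ := hcon r₀ ⟨hr₀1, le_rfl⟩
    obtain ⟨δ, hδdef⟩ : ∃ d : ℝ, d = -ψ r₀ := ⟨_, rfl⟩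
    have hδ : 0 < δ := by
      have := hψneg r₀ ⟨hr₀1, le_rfl⟩
      rw [hδdef]; linarith
    obtain ⟨c, hcdef⟩ : ∃ d : ℝ, d = ν*(R-r₀)*δ := ⟨_, rfl⟩
    have hc : 0 < c := by rw [hcdef]; exact mul_pos (mul_pos hν0 (by linarith)) hδ
    obtain ⟨K, hKdef⟩ : ∃ d : ℝ, d = M^2+1 := ⟨_, rfl⟩
    have hK : 0 < K := by rw [hKdef]; positivity
    obtain ⟨ε, hεdef⟩ : ∃ d : ℝ, d = min ((c/(2*K))^2/2) ((1+r₀)/2) := ⟨_, rfl⟩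
    have hε : 0 < ε := by
      rw [hεdef]
      refine lt_min ?_ (by linarith)
      have : c/(2*K) > 0 := by positivity
      positivity
    obtain ⟨ρ, hρdef⟩ : ∃ d : ℝ, d = -1+ε := ⟨_, rfl⟩
    have hρ1 : -1 < ρ := by rw [hρdef]; linarith
    have hρr₀ : ρ < r₀ := by
      have h5 : ε ≤ (1+r₀)/2 := by rw [hεdef]; exact min_le_right _ _
      rw [hρdef]; linarith
    have hρmem : ρ ∈ Set.Ioc (-1:ℝ) r₀ := ⟨hρ1, hρr₀.le⟩
    -- pointwise bounds on Ioc (-1) ρ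
    have hbnd : ∀ x ∈ Set.Ioc (-1:ℝ) ρ, c/(4*(k:ℝ)*(1+x)) ≤ Phi n k R x (ψ x) := by
      intro x hx
      have hxmem : x ∈ Set.Ioc (-1:ℝ) r₀ := ⟨hx.1, le_trans hx.2 hρr₀.le⟩
      have hfpos : (0:ℝ) < 1 - x^2 := (hgderiv x hxmem).1
      have hMx : M ≤ ψ x := hcon x hxmem
      have hψδ : ψ x ≤ -δ := by
        have := hmonoψ hxmem ⟨hr₀1, le_rfl⟩ (lt_of_le_of_lt hx.2 hρr₀)
        rw [hδdef]; linarith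
      have hsq : (ψ x)^2 ≤ M^2 := by
        have := mul_nonneg (show (0:ℝ) ≤ ψ x - M by linarith)
          (show (0:ℝ) ≤ -(M + ψ x) by linarith)
        linarith [this]
      have hsf : 0 < Real.sqrt (1-x^2) := Real.sqrt_pos.mpr hfpos
      have hsfle : Real.sqrt (1-x^2) ≤ c/(2*K) := by
        have hxε : 1+x ≤ ε := by rw [hρdef] at hx; linarith [hx.2]
        have hεle : ε ≤ (c/(2*K))^2/2 := by rw [hεdef]; exact min_le_left _ _
        have h6 : 1-x^2 ≤ (c/(2*K))^2 := by linarith [sq_nonneg (1+x), hx.1]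
        calc Real.sqrt (1-x^2) ≤ Real.sqrt ((c/(2*K))^2) := Real.sqrt_le_sqrt h6
          _ = c/(2*K) := Real.sqrt_sq (by positivity)
      -- quadratic bound : g x ≤ -(c/2)
      have hgle : g x ≤ -(c/2) := by
        have e1 : c ≤ ν*(R-x)*(-ψ x) := by
          have a1 : R-r₀ ≤ R-x := by linarith [le_trans hx.2 hρr₀.le]
          have a2 : δ ≤ -ψ x := by linarith
          have b1 : ν*(R-r₀) ≤ ν*(R-x) := by
            apply mul_le_mul_of_nonneg_left a1 hν0.le
          have b2 : 0 < ν*(R-r₀) := mul_pos hν0 (by linarith)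
          rw [hcdef]
          calc ν*(R-r₀)*δ ≤ ν*(R-x)*δ := mul_le_mul_of_nonneg_right b1 hδ.le
            _ ≤ ν*(R-x)*(-ψ x) := mul_le_mul_of_nonneg_left a2 (by linarith)
        have e2 : Real.sqrt (1-x^2)*((ψ x)^2+1) ≤ c/2 := by
          have : Real.sqrt (1-x^2)*((ψ x)^2+1) ≤ (c/(2*K))*K := by
            apply mul_le_mul hsfle (by rw [hKdef]; linarith) (by positivity) (by positivity)
          calc Real.sqrt (1-x^2)*((ψ x)^2+1) ≤ (c/(2*K))*K := this
            _ = c/2 := by field_simp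
        simp only [hgdef]
        linarith [e1, e2]
      -- lower bound on Phi
      have hPhix : Phi n k R x (ψ x) = ((ψ x)^2+1)*(-(g x))*(1/((k:ℝ)*(1-x^2))) := by
        rw [hPhig x]; ring
      have hu : 0 < 1/((k:ℝ)*(1-x^2)) := by positivity
      have t1 : c/2*(1/((k:ℝ)*(1-x^2))) ≤ ((ψ x)^2+1)*(-(g x))*(1/((k:ℝ)*(1-x^2))) := by
        apply mul_le_mul_of_nonneg_right _ hu.le
        linarith [mul_nonneg (sq_nonneg (ψ x)) (show (0:ℝ) ≤ -(g x) by linarith [hgle, hc]),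
          hgle, hc]
      have t2 : c/(4*(k:ℝ)*(1+x)) ≤ c/2*(1/((k:ℝ)*(1-x^2))) := by
        rw [mul_one_div, div_div]
        rw [div_le_div_iff₀
          (mul_pos (by positivity : (0:ℝ) < 4*(k:ℝ)) (show (0:ℝ) < 1+x by linarith [hx.1]))
          (by positivity : (0:ℝ) < 2*((k:ℝ)*(1-x^2)))]
        have h7 : 2*(1-x^2) ≤ 4*(1+x) := by linarith [sq_nonneg (1+x)]
        have h8 : (k:ℝ)*(2*(1-x^2)) ≤ (k:ℝ)*(4*(1+x)) := mul_le_mul_of_nonneg_left h7 hk0.le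
        linarith [mul_le_mul_of_nonneg_left h8 hc.le]
      rw [hPhix]
      linarith [t1, t2]
    -- comparison with a logarithm
    have hFmono : MonotoneOn (fun y => ψ y - c/(4*(k:ℝ))*Real.log (1+y)) (Set.Ioc (-1:ℝ) ρ) := by
      apply monotoneOn_of_deriv_nonneg (convex_Ioc _ _)
      · intro y hy
        have hymem : y ∈ Set.Ioc (-1:ℝ) r₀ := ⟨hy.1, le_trans hy.2 hρr₀.le⟩
        have h1y : (0:ℝ) < 1 + y := by linarith [hy.1]
        exact ((hode y hymem).continuousAt.sub
          (((hasDerivAt_log_one_add h1y).const_mul (c/(4*(k:ℝ)))).continuousAt)).continuousWithinAt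
      · intro y hy
        rw [interior_Ioc] at hy
        have hymem : y ∈ Set.Ioc (-1:ℝ) r₀ := ⟨hy.1, le_trans hy.2.le hρr₀.le⟩
        have h1y : (0:ℝ) < 1 + y := by linarith [hy.1]
        exact ((hode y hymem).sub
          ((hasDerivAt_log_one_add h1y).const_mul
            (c/(4*(k:ℝ))))).differentiableAt.differentiableWithinAt
      · intro y hy
        rw [interior_Ioc] at hy
        have hymem : y ∈ Set.Ioc (-1:ℝ) r₀ := ⟨hy.1, le_trans hy.2.le hρr₀.le⟩
        have h1y : (0:ℝ) < 1 + y := by linarith [hy.1]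
        have hder := (hode y hymem).sub
          ((hasDerivAt_log_one_add h1y).const_mul (c/(4*(k:ℝ))))
        rw [show (fun y => ψ y - c/(4*(k:ℝ))*Real.log (1+y)) = (ψ - fun y => c/(4*(k:ℝ))*Real.log (1+y)) from rfl, hder.deriv]
        have hb := hbnd y ⟨hy.1, hy.2.le⟩
        have heqd : c/(4*(k:ℝ))*(1+y)⁻¹ = c/(4*(k:ℝ)*(1+y)) := by
          rw [← div_eq_mul_inv, div_div]
        linarith [hb, heqd]
    -- pick a point close to -1 where ψ must be below M - 1
    obtain ⟨X, hXdef⟩ : ∃ d : ℝ, d = (4*(k:ℝ)/c)*(M - 1 - ψ ρ) + Real.log (1+ρ) := ⟨_, rfl⟩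
    obtain ⟨t, htdef⟩ : ∃ d : ℝ, d = min (Real.exp X) (1+ρ) := ⟨_, rfl⟩
    have ht0 : 0 < t := by rw [htdef]; exact lt_min (Real.exp_pos X) (by linarith)
    have htle : t ≤ 1+ρ := by rw [htdef]; exact min_le_right _ _
    obtain ⟨r, hrdef⟩ : ∃ d : ℝ, d = -1 + t := ⟨_, rfl⟩
    have hrmem : r ∈ Set.Ioc (-1:ℝ) ρ := ⟨by rw [hrdef]; linarith, by rw [hrdef]; linarith⟩
    have hF := hFmono hrmem (Set.right_mem_Ioc.mpr hρ1) hrmem.2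
    simp only at hF
    have h1r : 1 + r = t := by rw [hrdef]; ring
    have hlog : Real.log (1+r) ≤ X := by
      rw [h1r]
      calc Real.log t ≤ Real.log (Real.exp X) :=
            Real.log_le_log ht0 (by rw [htdef]; exact min_le_left _ _)
        _ = X := Real.log_exp X
    have hck : 0 < c/(4*(k:ℝ)) := by positivity
    have h7 : c/(4*(k:ℝ))*(Real.log (1+r)) ≤ c/(4*(k:ℝ))*X :=
      mul_le_mul_of_nonneg_left hlog hck.le
    have h8 : c/(4*(k:ℝ))*(X - Real.log (1+ρ)) = M - 1 - ψ ρ := by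
      rw [hXdef]
      field_simp
      ring
    have hψr : ψ r ≤ M - 1 := by linarith [hF, h7, h8]
    have := hcon r ⟨hrmem.1, le_trans hrmem.2 hρr₀.le⟩
    linarith
  -- conclusion
  rw [Filter.tendsto_atBot]
  intro M
  obtain ⟨rM, hrM, hψM⟩ := hclaim M
  filter_upwards [Ioo_mem_nhdsGT_of_mem ⟨le_refl (-1:ℝ), hrM.1⟩] with x hx
  have hxmem : x ∈ Set.Ioc (-1:ℝ) r₀ := ⟨hx.1, le_trans hx.2.le hrM.2⟩
  exact (lt_trans (hmonoψ hxmem hrM hx.2) hψM).le
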